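/- For n > 2h+1, the total number of independent subsets q(n) of the h-th power of a cycle on n vertices satisfies q(n) = q(n-1) + q(n-h-1), where q(m) denotes the number of independent subsets of the h-th power of a cycle on m vertices. -/
import Mathlib


/-- Independent subsets of the h-th power of the path on n vertices:
subsets of {1,...,n} with all pairwise differences of distinct elements greater than h. -/
def pathSubsets (n h : ℕ) : Finset (Finset ℕ) :=
  (Finset.Icc 1 n).powerset.filter (fun S => ∀ i ∈ S, ∀ j ∈ S, i < j → i + h < j)

def pathCount (n h k : ℕ) : ℕ := ((pathSubsets n h).filter (fun S => S.card = k)).card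

def pathTotal (n h : ℕ) : ℕ := (pathSubsets n h).card

/-- Independent subsets of the h-th power of the cycle on n vertices:
subsets S of {1,...,n} with h < |i-j| < n-h for all distinct i,j ∈ S. -/
def cycleSubsets (n h : ℕ) : Finset (Finset ℕ) :=
  (Finset.Icc 1 n).powerset.filter
    (fun S => ∀ i ∈ S, ∀ j ∈ S, i < j → i + h < j ∧ j + h < n + i)

def cycleCount (n h k : ℕ) : ℕ := ((cycleSubsets n h).filter (fun S => S.card = k)).card

def cycleTotal (n h : ℕ) : ℕ := (cycleSubsets n h).card

/-- Number of edges of the Hasse diagram of independent subsets of Pₙ⁽ʰ⁾ ordered by inclusion. -/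
def pathEdges (n h : ℕ) : ℕ :=
  (((pathSubsets n h) ×ˢ (pathSubsets n h)).filter
    (fun p => p.1 ⊆ p.2 ∧ p.2.card = p.1.card + 1)).card

/-- Number of edges of the Hasse diagram of independent subsets of Cₙ⁽ʰ⁾ ordered by inclusion. -/
def cycleEdges (n h : ℕ) : ℕ :=
  (((cycleSubsets n h) ×ˢ (cycleSubsets n h)).filter
    (fun p => p.1 ⊆ p.2 ∧ p.2.card = p.1.card + 1)).card

lemma mem_pathSubsets {m h : ℕ} {S : Finset ℕ} :
    S ∈ pathSubsets m h ↔ S ⊆ Finset.Icc 1 m ∧ ∀ i ∈ S, ∀ j ∈ S, i < j → i + h < j := by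
  simp [pathSubsets]

lemma mem_cycleSubsets {n h : ℕ} {S : Finset ℕ} :
    S ∈ cycleSubsets n h ↔ S ⊆ Finset.Icc 1 n ∧
      ∀ i ∈ S, ∀ j ∈ S, i < j → i + h < j ∧ j + h < n + i := by
  simp [cycleSubsets]

lemma p_rec (m h : ℕ) (hm : 1 ≤ m) :
    pathTotal m h = pathTotal (m - 1) h + pathTotal (m - h - 1) h := by
  classical
  have key := Finset.card_filter_add_card_filter_not
    (s := pathSubsets m h) (p := fun S => m ∈ S)
  have h1 : ((pathSubsets m h).filter (fun S => ¬ m ∈ S)) = pathSubsets (m - 1) h := by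
    ext S
    simp only [Finset.mem_filter, mem_pathSubsets]
    constructor
    · rintro ⟨⟨hsub, hgap⟩, hm'⟩
      refine ⟨fun x hx => ?_, hgap⟩
      have := hsub hx
      simp only [Finset.mem_Icc] at this ⊢
      have hxm : x ≠ m := fun e => hm' (e ▸ hx)
      omega
    · rintro ⟨hsub, hgap⟩
      refine ⟨⟨fun x hx => ?_, hgap⟩, fun hmS => ?_⟩
      · have := hsub hx
        simp only [Finset.mem_Icc] at this ⊢
        omega
      · have := hsub hmS
        simp only [Finset.mem_Icc] at this
        omega
  have h2 : ((pathSubsets m h).filter (fun S => m ∈ S)).card = pathTotal (m - h - 1) h := by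
    unfold pathTotal
    refine Finset.card_bij' (fun S _ => S.erase m) (fun T _ => insert m T) ?_ ?_ ?_ ?_
    · rintro S hS
      simp only [Finset.mem_filter, mem_pathSubsets] at hS
      obtain ⟨⟨hsub, hgap⟩, hmS⟩ := hS
      rw [mem_pathSubsets]
      constructor
      · intro x hx
        rw [Finset.mem_erase] at hx
        obtain ⟨hxm, hxS⟩ := hx
        have hb := hsub hxS
        simp only [Finset.mem_Icc] at hb ⊢
        have hlt : x < m := by omega
        have := hgap x hxS m hmS hlt
        omega
      · intro i hi j hj hij
        rw [Finset.mem_erase] at hi hj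
        exact hgap i hi.2 j hj.2 hij
    · rintro T hT
      rw [mem_pathSubsets] at hT
      obtain ⟨hsub, hgap⟩ := hT
      simp only [Finset.mem_filter, mem_pathSubsets]
      have hbound : ∀ x ∈ T, 1 ≤ x ∧ x ≤ m - h - 1 := by
        intro x hx; have := hsub hx; simpa [Finset.mem_Icc] using this
      refine ⟨⟨fun x hx => ?_, ?_⟩, Finset.mem_insert_self m T⟩
      · rw [Finset.mem_insert] at hx
        simp only [Finset.mem_Icc]
        rcases hx with rfl | hx
        · omega
        · have := hbound x hx; omega
      · intro i hi j hj hij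
        rw [Finset.mem_insert] at hi hj
        rcases hi with rfl | hi
        · rcases hj with rfl | hj
          · omega
          · have := hbound j hj; omega
        · rcases hj with rfl | hj
          · have := hbound i hi; omega
          · exact hgap i hi j hj hij
    · rintro S hS
      simp only [Finset.mem_filter] at hS
      exact Finset.insert_erase hS.2
    · rintro T hT
      rw [mem_pathSubsets] at hT
      have hmT : m ∉ T := by
        intro hmT
        have := hT.1 hmT
        simp only [Finset.mem_Icc] at this
        omega
      exact Finset.erase_insert hmT
  unfold pathTotal at *
  rw [← key, h1] at *
  omega

lemma q_formula (k h : ℕ) (hk : h + 1 ≤ k) :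
    cycleTotal k h = pathTotal (k - h) h + h * pathTotal (k - 2 * h - 1) h := by
  classical
  have key := Finset.card_filter_add_card_filter_not
    (s := cycleSubsets k h) (p := fun S => ∀ j ∈ S, j ≤ k - h)
  -- first part: sets within [1, k-h]
  have h1 : ((cycleSubsets k h).filter (fun S => ∀ j ∈ S, j ≤ k - h)) = pathSubsets (k - h) h := by
    ext S
    simp only [Finset.mem_filter, mem_cycleSubsets, mem_pathSubsets]
    constructor
    · rintro ⟨⟨hsub, hcyc⟩, hbd⟩
      refine ⟨fun x hx => ?_, fun i hi j hj hij => (hcyc i hi j hj hij).1⟩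
      have := hsub hx
      have := hbd x hx
      simp only [Finset.mem_Icc] at *
      omega
    · rintro ⟨hsub, hgap⟩
      have hbd : ∀ x ∈ S, 1 ≤ x ∧ x ≤ k - h := by
        intro x hx; have := hsub hx; simpa [Finset.mem_Icc] using this
      refine ⟨⟨fun x hx => ?_, fun i hi j hj hij => ⟨hgap i hi j hj hij, ?_⟩⟩,
        fun x hx => (hbd x hx).2⟩
      · have := hbd x hx
        simp only [Finset.mem_Icc]
        omega
      · have := hbd i hi
        have := hbd j hj
        omega
  -- second part: sets containing an element > k-h
  have h2 : ((cycleSubsets k h).filter (fun S => ¬ ∀ j ∈ S, j ≤ k - h)).card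
      = h * pathTotal (k - 2 * h - 1) h := by
    have hcard : h * pathTotal (k - 2 * h - 1) h
        = ((Finset.Icc 1 h) ×ˢ pathSubsets (k - 2 * h - 1) h).card := by
      rw [Finset.card_product, Nat.card_Icc]
      simp [pathTotal]
    rw [hcard]
    symm
    refine Finset.card_bij (fun p _ => insert (k - h + p.1) (p.2.image (· + p.1))) ?_ ?_ ?_
    · -- maps into target
      rintro ⟨t, T⟩ hp
      rw [Finset.mem_product, Finset.mem_Icc] at hp
      obtain ⟨⟨ht1, ht2⟩, hT⟩ := hp
      rw [mem_pathSubsets] at hT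
      obtain ⟨hsub, hgap⟩ := hT
      have hbd : ∀ x ∈ T, 1 ≤ x ∧ x ≤ k - 2 * h - 1 := by
        intro x hx; have := hsub hx; simpa [Finset.mem_Icc] using this
      simp only [Finset.mem_filter, mem_cycleSubsets]
      refine ⟨⟨fun x hx => ?_, fun i hi j hj hij => ?_⟩, fun hall => ?_⟩
      · rw [Finset.mem_insert] at hx
        simp only [Finset.mem_Icc]
        rcases hx with rfl | hx
        · omega
        · simp only [Finset.mem_image] at hx
          obtain ⟨y, hy, rfl⟩ := hx
          have := hbd y hy
          omega
      · rw [Finset.mem_insert] at hi hj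
        simp only [Finset.mem_image] at hi hj
        rcases hi with rfl | ⟨x, hx, rfl⟩
        · rcases hj with rfl | ⟨y, hy, rfl⟩
          · omega
          · have := hbd y hy; omega
        · rcases hj with rfl | ⟨y, hy, rfl⟩
          · have := hbd x hx; omega
          · have hbx := hbd x hx
            have hby := hbd y hy
            have hxy : x < y := by omega
            have := hgap x hx y hy hxy
            omega
      · have := hall (k - h + t) (Finset.mem_insert_self _ _)
        omega
    · -- injective
      rintro ⟨t, T⟩ hp ⟨t', T'⟩ hp' heq
      simp only at heq
      rw [Finset.mem_product, Finset.mem_Icc] at hp hp'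
      obtain ⟨⟨ht1, ht2⟩, hT⟩ := hp
      obtain ⟨⟨ht1', ht2'⟩, hT'⟩ := hp'
      rw [mem_pathSubsets] at hT hT'
      have hbd : ∀ x ∈ T, 1 ≤ x ∧ x ≤ k - 2 * h - 1 := by
        intro x hx; have := hT.1 hx; simpa [Finset.mem_Icc] using this
      have hbd' : ∀ x ∈ T', 1 ≤ x ∧ x ≤ k - 2 * h - 1 := by
        intro x hx; have := hT'.1 hx; simpa [Finset.mem_Icc] using this
      have htt : t = t' := by
        have hmem : k - h + t ∈ insert (k - h + t') (T'.image (· + t')) := by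
          rw [← heq]; exact Finset.mem_insert_self _ _
        rw [Finset.mem_insert] at hmem
        rcases hmem with he | hmem
        · omega
        · simp only [Finset.mem_image] at hmem
          obtain ⟨y, hy, hye⟩ := hmem
          have := hbd' y hy
          omega
      subst htt
      have hnT : k - h + t ∉ T.image (· + t) := by
        simp only [Finset.mem_image]
        rintro ⟨y, hy, hye⟩
        have := hbd y hy
        omega
      have hnT' : k - h + t ∉ T'.image (· + t) := by
        simp only [Finset.mem_image]
        rintro ⟨y, hy, hye⟩
        have := hbd' y hy
        omega
      have himg : T.image (· + t) = T'.image (· + t) := by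
        have := congrArg (fun s => Finset.erase s (k - h + t)) heq
        simpa [Finset.erase_insert hnT, Finset.erase_insert hnT'] using this
      have : T = T' := by
        apply Finset.image_injective (f := (· + t)) ?_ himg
        intro a b hab
        simpa using hab
      simp [this]
    · -- surjective
      rintro S hS
      simp only [Finset.mem_filter, mem_cycleSubsets] at hS
      obtain ⟨⟨hsub, hcyc⟩, hnall⟩ := hS
      push_neg at hnall
      obtain ⟨j, hjS, hjgt⟩ := hnall
      have hbd : ∀ x ∈ S, 1 ≤ x ∧ x ≤ k := by
        intro x hx; have := hsub hx; simpa [Finset.mem_Icc] using this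
      have hjb := hbd j hjS
      set t := j - (k - h) with htdef
      have hjt : j = k - h + t := by omega
      have ht1 : 1 ≤ t := by omega
      have ht2 : t ≤ h := by omega
      -- every other element x of S satisfies t + 1 ≤ x ≤ k - 2h - 1 + t
      have hxbd : ∀ x ∈ S.erase j, t + 1 ≤ x ∧ x ≤ k - 2 * h - 1 + t ∧ t ≤ x := by
        intro x hx
        rw [Finset.mem_erase] at hx
        obtain ⟨hxj, hxS⟩ := hx
        have hxb := hbd x hxS
        rcases lt_or_gt_of_ne hxj with hlt | hgt
        · have := hcyc x hxS j hjS hlt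
          omega
        · have := hcyc j hjS x hxS hgt
          omega
      refine ⟨⟨t, (S.erase j).image (· - t)⟩, ?_, ?_⟩
      · rw [Finset.mem_product, Finset.mem_Icc]
        refine ⟨⟨ht1, ht2⟩, ?_⟩
        rw [mem_pathSubsets]
        constructor
        · intro y hy
          simp only [Finset.mem_image] at hy
          obtain ⟨x, hx, rfl⟩ := hy
          have := hxbd x hx
          simp only [Finset.mem_Icc]
          omega
        · intro a ha b hb hab
          simp only [Finset.mem_image] at ha hb
          obtain ⟨x, hx, rfl⟩ := ha
          obtain ⟨y, hy, rfl⟩ := hb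
          have hxb := hxbd x hx
          have hyb := hxbd y hy
          have hxy : x < y := by omega
          rw [Finset.mem_erase] at hx hy
          have := (hcyc x hx.2 y hy.2 hxy).1
          omega
      · -- f (t, T) = S
        simp only
        rw [Finset.image_image]
        have himid : (S.erase j).image ((· + t) ∘ (· - t)) = S.erase j := by
          rw [Finset.image_congr (g := id), Finset.image_id]
          intro x hx
          have := hxbd x hx
          simp only [Function.comp_apply, id_eq]
          omega
        rw [himid, ← hjt, Finset.insert_erase hjS]
  unfold cycleTotal
  rw [← key, h1, h2]
  rfl

theorem stmt16 (n h : ℕ) (hn : n > 2 * h + 1) :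
    cycleTotal n h = cycleTotal (n - 1) h + cycleTotal (n - h - 1) h := by
  have q1 := q_formula n h (by omega)
  have q2 := q_formula (n - 1) h (by omega)
  have q3 := q_formula (n - h - 1) h (by omega)
  have p1 := p_rec (n - h) h (by omega)
  have p2 := p_rec (n - 2 * h - 1) h (by omega)
  rw [show n - 1 - h = n - h - 1 from by omega,
      show n - 1 - 2 * h - 1 = n - 2 * h - 2 from by omega] at q2
  rw [show n - h - 1 - h = n - 2 * h - 1 from by omega,
      show n - h - 1 - 2 * h - 1 = n - 3 * h - 2 from by omega] at q3
  rw [show n - h - h - 1 = n - 2 * h - 1 from by omega] at p1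
  rw [show n - 2 * h - 1 - 1 = n - 2 * h - 2 from by omega,
      show n - 2 * h - 1 - h - 1 = n - 3 * h - 2 from by omega] at p2
  rw [q1, q2, q3, p1, p2]
  ring
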